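/- Let X be a set, φ : X × X → ℝ≥0 a symmetric function with φ(x,y) = 0 if and only if x = y, and ψ : X × X × X → ℝ a function bounded above and below, satisfying the triangle inequality with multiplicative cost: φ(x,y) ≤ (φ(x,z) + φ(z,y))·e^{ψ(x,y,z)} for all x,y,z. Let 0 ≤ k < 1 and let F : X → X be a map such that φ(F(x),F(y)) ≤ k·φ(x,y) for all x,y, and ψ(F(x),F(y),F(z)) ≤ k·ψ(x,y,z) whenever both sides are positive. Then for any x ∈ X the sequence of iterates (Fⁱ(x)) is Cauchy with respect to φ, and if (X,φ) is complete, the limit of this sequence is the unique fixed point of F. -/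

import Mathlib

open Filter Topology

theorem stmt_2 {X : Type*} (φ : X → X → ℝ) (ψ : X → X → X → ℝ)
    (hφ0 : ∀ x y : X, 0 ≤ φ x y)
    (hS : ∀ x y : X, φ x y = φ y x)
    (hsep : ∀ x y : X, φ x y = 0 ↔ x = y)
    (M : ℝ) (hψbdd : ∀ x y z : X, |ψ x y z| ≤ M)
    (htri : ∀ x y z : X, φ x y ≤ (φ x z + φ z y) * Real.exp (ψ x y z))
    (F : X → X) (k : ℝ) (hk0 : 0 ≤ k) (hk1 : k < 1)
    (hFφ : ∀ x y : X, φ (F x) (F y) ≤ k * φ x y)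
    (hFψ : ∀ x y z : X, 0 < ψ (F x) (F y) (F z) → 0 < k * ψ x y z →
        ψ (F x) (F y) (F z) ≤ k * ψ x y z) :
    (∀ x : X, ∀ ε > (0 : ℝ), ∃ N : ℕ, ∀ n ≥ N, ∀ m ≥ N, φ (F^[n] x) (F^[m] x) < ε) ∧
    ((∀ u : ℕ → X, (∀ ε > (0 : ℝ), ∃ N : ℕ, ∀ n ≥ N, ∀ m ≥ N, φ (u n) (u m) < ε) →
        ∃ l : X, Tendsto (fun n => φ (u n) l) atTop (𝓝 0)) →
      ∀ x : X, ∃ z : X, Tendsto (fun n => φ (F^[n] x) z) atTop (𝓝 0) ∧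
        F z = z ∧ ∀ w : X, F w = w → w = z) := by
  have hiter : ∀ (p : ℕ) (a b : X), φ (F^[p] a) (F^[p] b) ≤ k ^ p * φ a b := by
    intro p
    induction p with
    | zero => intro a b; simp
    | succ p ih =>
      intro a b
      rw [Function.iterate_succ_apply', Function.iterate_succ_apply']
      calc φ (F (F^[p] a)) (F (F^[p] b)) ≤ k * φ (F^[p] a) (F^[p] b) := hFφ _ _
        _ ≤ k * (k ^ p * φ a b) := mul_le_mul_of_nonneg_left (ih a b) hk0
        _ = k ^ (p + 1) * φ a b := by ring
  have hexp : ∀ x y z : X, Real.exp (ψ x y z) ≤ Real.exp M := by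
    intro a b c
    exact Real.exp_le_exp.mpr ((le_abs_self _).trans (hψbdd a b c))
  -- each orbit is bounded
  have hbdd : ∀ x : X, ∃ B : ℝ, 0 ≤ B ∧ ∀ i j : ℕ, φ (F^[i] x) (F^[j] x) ≤ B := by
    intro x
    have htend := tendsto_pow_atTop_nhds_zero_of_lt_one hk0 hk1
    have h2 : ∀ᶠ n in atTop, k ^ n < (1 / 2) / Real.exp M :=
      htend.eventually (gt_mem_nhds (by positivity))
    obtain ⟨P0, hP0⟩ := eventually_atTop.mp h2
    set P := max P0 1 with hPdef
    have hP1 : 1 ≤ P := le_max_right _ _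
    have hkPe : k ^ P * Real.exp M < 1 / 2 := by
      have := hP0 P (le_max_left _ _)
      have hepos := Real.exp_pos M
      rw [lt_div_iff₀ hepos] at this
      exact this
    set C := (Finset.range (P + 1)).sup' (by simp) (fun j => φ x (F^[j] x)) with hCdef
    have hC : ∀ j, j ≤ P → φ x (F^[j] x) ≤ C := by
      intro j hj
      exact Finset.le_sup' (fun j => φ x (F^[j] x)) (Finset.mem_range.mpr (Nat.lt_succ_of_le hj))
    have hC0 : 0 ≤ C := by
      have := hC 0 (by omega)
      simpa using this.trans_eq' (by simp [(hsep x x).mpr rfl])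
    set B := 2 * Real.exp M * C + C with hBdef
    have hepos := Real.exp_pos M
    have hB0 : 0 ≤ B := by nlinarith
    have hD : ∀ n, φ x (F^[n] x) ≤ B := by
      intro n
      induction n using Nat.strong_induction_on with
      | _ n ih =>
        by_cases hn : n ≤ P
        · calc φ x (F^[n] x) ≤ C := hC n hn
            _ ≤ B := by nlinarith
        · push_neg at hn
          have hsplit : F^[n] x = F^[P] (F^[n - P] x) := by
            rw [← Function.iterate_add_apply]
            congr 1; omega
          have h1 : φ (F^[P] x) (F^[n] x) ≤ k ^ P * φ x (F^[n - P] x) := by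
            rw [hsplit]; exact hiter P x _
          have h2 : φ x (F^[n - P] x) ≤ B := ih (n - P) (by omega)
          have h3 := htri x (F^[n] x) (F^[P] x)
          have h4 := hexp x (F^[n] x) (F^[P] x)
          have h5 : φ x (F^[P] x) ≤ C := hC P le_rfl
          have hkP : (0 : ℝ) ≤ k ^ P := pow_nonneg hk0 P
          have hmid : φ (F^[P] x) (F^[n] x) ≤ k ^ P * B :=
            h1.trans (mul_le_mul_of_nonneg_left h2 hkP)
          calc φ x (F^[n] x)
              ≤ (φ x (F^[P] x) + φ (F^[P] x) (F^[n] x)) * Real.exp (ψ x (F^[n] x) (F^[P] x)) := h3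
            _ ≤ (C + k ^ P * B) * Real.exp M := by
                apply mul_le_mul (by linarith) h4 (Real.exp_pos _).le
                nlinarith
            _ = C * Real.exp M + (k ^ P * Real.exp M) * B := by ring
            _ ≤ C * Real.exp M + (1 / 2) * B := by nlinarith
            _ ≤ B := by nlinarith
    refine ⟨B, hB0, ?_⟩
    have key : ∀ i j : ℕ, i ≤ j → φ (F^[i] x) (F^[j] x) ≤ B := by
      intro i j hij
      have hsplit : F^[j] x = F^[i] (F^[j - i] x) := by
        rw [← Function.iterate_add_apply]
        congr 1; omega
      rw [hsplit]
      calc φ (F^[i] x) (F^[i] (F^[j - i] x)) ≤ k ^ i * φ x (F^[j - i] x) := hiter i x _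
        _ ≤ 1 * B := mul_le_mul (pow_le_one₀ hk0 hk1.le) (hD _) (hφ0 _ _) zero_le_one
        _ = B := one_mul B
    intro i j
    rcases le_total i j with h | h
    · exact key i j h
    · rw [hS]; exact key j i h
  have cauchy : ∀ x : X, ∀ ε > (0 : ℝ), ∃ N : ℕ, ∀ n ≥ N, ∀ m ≥ N,
      φ (F^[n] x) (F^[m] x) < ε := by
    intro x ε hε
    obtain ⟨B, hB0, hB⟩ := hbdd x
    have htend : Tendsto (fun n : ℕ => k ^ n * B) atTop (𝓝 0) := by
      simpa using (tendsto_pow_atTop_nhds_zero_of_lt_one hk0 hk1).mul_const B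
    obtain ⟨N, hN⟩ := eventually_atTop.mp (htend.eventually (gt_mem_nhds hε))
    refine ⟨N, fun n hn m hm => ?_⟩
    have h1 : F^[n] x = F^[N] (F^[n - N] x) := by
      rw [← Function.iterate_add_apply]; congr 1; omega
    have h2 : F^[m] x = F^[N] (F^[m - N] x) := by
      rw [← Function.iterate_add_apply]; congr 1; omega
    calc φ (F^[n] x) (F^[m] x) = φ (F^[N] (F^[n - N] x)) (F^[N] (F^[m - N] x)) := by
          rw [h1, h2]
      _ ≤ k ^ N * φ (F^[n - N] x) (F^[m - N] x) := hiter N _ _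
      _ ≤ k ^ N * B := by
          have := hB (n - N + 0) (m - N + 0)
          simp only [Nat.add_zero] at this
          have : φ (F^[n - N] x) (F^[m - N] x) ≤ B := by
            have h3 := hB (n - N) (m - N); exact h3
          exact mul_le_mul_of_nonneg_left this (pow_nonneg hk0 N)
      _ < ε := hN N le_rfl
  refine ⟨cauchy, ?_⟩
  intro hcomp x
  obtain ⟨z, hz⟩ := hcomp (fun n => F^[n] x) (cauchy x)
  have hepos := Real.exp_pos M
  have hFz : F z = z := by
    have hle : ∀ ε > (0 : ℝ), φ (F z) z ≤ ε := by
      intro ε hε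
      set δ := ε / ((1 + k) * Real.exp M) with hδdef
      have hδ : 0 < δ := by positivity
      obtain ⟨N, hN⟩ := eventually_atTop.mp (hz.eventually (gt_mem_nhds hδ))
      have hN1 : φ (F^[N] x) z < δ := hN N le_rfl
      have hN2 : φ (F^[N + 1] x) z < δ := hN (N + 1) (by omega)
      have h3 := htri (F z) z (F^[N + 1] x)
      have h4 : φ (F z) (F^[N + 1] x) ≤ k * φ (F^[N] x) z := by
        rw [Function.iterate_succ_apply', hS (F^[N] x) z]
        exact hFφ z (F^[N] x)
      have h5 := hexp (F z) z (F^[N + 1] x)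
      have hsum : φ (F z) (F^[N + 1] x) + φ (F^[N + 1] x) z ≤ (1 + k) * δ := by
        have hk1' : k * φ (F^[N] x) z ≤ k * δ := mul_le_mul_of_nonneg_left hN1.le hk0
        linarith
      calc φ (F z) z
          ≤ (φ (F z) (F^[N + 1] x) + φ (F^[N + 1] x) z) * Real.exp (ψ (F z) z (F^[N + 1] x)) :=
            h3
        _ ≤ ((1 + k) * δ) * Real.exp M := by
            apply mul_le_mul hsum h5 (Real.exp_pos _).le
            have := hφ0 (F z) (F^[N + 1] x)
            have := hφ0 (F^[N + 1] x) z
            nlinarith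
        _ = ε := by
            rw [hδdef]
            field_simp
    have h0 : φ (F z) z ≤ 0 := by
      refine le_of_forall_pos_le_add ?_
      intro ε hε
      simpa using hle ε hε
    exact (hsep (F z) z).mp (le_antisymm h0 (hφ0 _ _))
  refine ⟨z, hz, hFz, ?_⟩
  intro w hw
  have h1 : φ w z ≤ k * φ w z := by
    calc φ w z = φ (F w) (F z) := by rw [hw, hFz]
      _ ≤ k * φ w z := hFφ w z
  have h0 : φ w z = 0 := by nlinarith [hφ0 w z]
  exact (hsep w z).mp h0
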